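/- Given pastures P, P₁, P₂ and morphisms of pastures f₁ : P₁ → P and f₂ : P₂ → P, the fibered product P₁ ×_P P₂ with the projections π₁ and π₂ satisfies the universal property of the fibered product: if P' is a pasture and g₁ : P' → P₁, g₂ : P' → P₂ are morphisms of pastures with f₁ ∘ g₁ = f₂ ∘ g₂, then there is a unique morphism of pastures g : P' → P₁ ×_P P₂ with π₁ ∘ g = g₁ and π₂ ∘ g = g₂; explicitly, g(0)=0 and g(x) = (g₁(x), g₂(x)) for x ≠ 0. -/

import Mathlib

universe u v w

/-- A pasture structure on a type `P`: a multiplication, a zero, a one,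
an involution `neg`, and a ternary nullset relation `null a b c`
(meaning "`a + b + c = 0`"). -/
structure PastureStr (P : Type u) where
  mul : P → P → P
  zero : P
  one : P
  neg : P → P
  null : P → P → P → Prop

/-- `P` together with a `PastureStr` is a pasture: `P` is a commutative
monoid with zero whose nonzero elements form an abelian group, `neg` is an
involution fixing `0`, and the nullset is invariant under permutations,
invariant under multiplication, and satisfies `a + b + 0 = 0 ↔ a = -b`. -/
structure PastureStr.IsPasture {P : Type u} (S : PastureStr P) : Prop where
  mul_comm : ∀ a b : P, S.mul a b = S.mul b a
  mul_assoc : ∀ a b c : P, S.mul (S.mul a b) c = S.mul a (S.mul b c)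
  one_mul : ∀ a : P, S.mul S.one a = a
  zero_mul : ∀ a : P, S.mul S.zero a = S.zero
  one_ne_zero : S.one ≠ S.zero
  mul_ne_zero : ∀ a b : P, a ≠ S.zero → b ≠ S.zero → S.mul a b ≠ S.zero
  exists_inv : ∀ a : P, a ≠ S.zero → ∃ b : P, S.mul a b = S.one
  neg_neg : ∀ a : P, S.neg (S.neg a) = a
  neg_zero : S.neg S.zero = S.zero
  null_swap_left : ∀ a b c : P, S.null a b c → S.null b a c
  null_swap_right : ∀ a b c : P, S.null a b c → S.null a c b
  null_mul : ∀ d a b c : P, S.null a b c → S.null (S.mul d a) (S.mul d b) (S.mul d c)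
  null_zero : ∀ a b : P, S.null a b S.zero ↔ a = S.neg b

/-- A morphism of pastures: a multiplicative map preserving `0`, `1`,
the involution and the nullset. -/
structure PastureStr.IsHom {P : Type u} {P' : Type v} (S : PastureStr P) (T : PastureStr P')
    (f : P → P') : Prop where
  map_mul : ∀ a b : P, f (S.mul a b) = T.mul (f a) (f b)
  map_zero : f S.zero = T.zero
  map_one : f S.one = T.one
  map_neg : ∀ a : P, f (S.neg a) = T.neg (f a)
  map_null : ∀ a b c : P, S.null a b c → T.null (f a) (f b) (f c)

variable {P P₁ P₂ : Type u}

/-- The underlying set of the fibered product `P₁ ×_P P₂`: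
`{0} ∪ {(a,b) : a ∈ P₁^×, b ∈ P₂^×, f₁ a = f₂ b}`, with `none` playing
the role of `0`. -/
def FibCarrier (S₁ : PastureStr P₁) (S₂ : PastureStr P₂)
    (f₁ : P₁ → P) (f₂ : P₂ → P) : Type u :=
  Option {p : P₁ × P₂ // p.1 ≠ S₁.zero ∧ p.2 ≠ S₂.zero ∧ f₁ p.1 = f₂ p.2}

/-- The pasture structure on the fibered product `P₁ ×_P P₂`: componentwise
multiplication with `0` absorbing, involution `(a,b) ↦ (-a,-b)` fixing `0`,
and nullset given by all permutations of `0+0+0=0`, `(a,b)+(-a,-b)+0=0`, and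
componentwise relations for nonzero triples. -/
def fibStr (S : PastureStr P) (S₁ : PastureStr P₁) (S₂ : PastureStr P₂)
    (hS₁ : S₁.IsPasture) (hS₂ : S₂.IsPasture) (f₁ : P₁ → P) (f₂ : P₂ → P)
    (hf₁ : S₁.IsHom S f₁) (hf₂ : S₂.IsHom S f₂) :
    PastureStr (FibCarrier S₁ S₂ f₁ f₂) where
  mul x y :=
    match x, y with
    | some a, some b =>
        some ⟨(S₁.mul a.1.1 b.1.1, S₂.mul a.1.2 b.1.2),
          hS₁.mul_ne_zero _ _ a.2.1 b.2.1,
          hS₂.mul_ne_zero _ _ a.2.2.1 b.2.2.1, by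
            show f₁ (S₁.mul a.1.1 b.1.1) = f₂ (S₂.mul a.1.2 b.1.2)
            rw [hf₁.map_mul, hf₂.map_mul, a.2.2.2, b.2.2.2]⟩
    | _, _ => none
  zero := none
  one := some ⟨(S₁.one, S₂.one), hS₁.one_ne_zero, hS₂.one_ne_zero, by
    show f₁ S₁.one = f₂ S₂.one
    rw [hf₁.map_one, hf₂.map_one]⟩
  neg x :=
    match x with
    | none => none
    | some a =>
        some ⟨(S₁.neg a.1.1, S₂.neg a.1.2),
          fun hc => a.2.1 (by
            have hc' : S₁.neg a.1.1 = S₁.zero := hc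
            rw [← hS₁.neg_neg a.1.1, hc', hS₁.neg_zero]),
          fun hc => a.2.2.1 (by
            have hc' : S₂.neg a.1.2 = S₂.zero := hc
            rw [← hS₂.neg_neg a.1.2, hc', hS₂.neg_zero]), by
            show f₁ (S₁.neg a.1.1) = f₂ (S₂.neg a.1.2)
            rw [hf₁.map_neg, hf₂.map_neg, a.2.2.2]⟩
  null x y z :=
    match x, y, z with
    | none, none, none => True
    | some a, some b, none => a.1.1 = S₁.neg b.1.1 ∧ a.1.2 = S₂.neg b.1.2
    | some a, none, some c => a.1.1 = S₁.neg c.1.1 ∧ a.1.2 = S₂.neg c.1.2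
    | none, some b, some c => b.1.1 = S₁.neg c.1.1 ∧ b.1.2 = S₂.neg c.1.2
    | some _, none, none => False
    | none, some _, none => False
    | none, none, some _ => False
    | some a, some b, some c =>
        S₁.null a.1.1 b.1.1 c.1.1 ∧ S₂.null a.1.2 b.1.2 c.1.2

/-- The first projection `π₁ : P₁ ×_P P₂ → P₁`, sending `0` to `0`. -/
def fibProj₁ (S₁ : PastureStr P₁) (S₂ : PastureStr P₂)
    (f₁ : P₁ → P) (f₂ : P₂ → P) : FibCarrier S₁ S₂ f₁ f₂ → P₁ := fun x =>
  match x with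
  | none => S₁.zero
  | some a => a.1.1

/-- The second projection `π₂ : P₁ ×_P P₂ → P₂`, sending `0` to `0`. -/
def fibProj₂ (S₁ : PastureStr P₁) (S₂ : PastureStr P₂)
    (f₁ : P₁ → P) (f₂ : P₂ → P) : FibCarrier S₁ S₂ f₁ f₂ → P₂ := fun x =>
  match x with
  | none => S₂.zero
  | some a => a.1.2

/-- A morphism of pastures sends nonzero elements to nonzero elements. -/
theorem hom_ne_zero {A : Type v} {B : Type w} {SA : PastureStr A} {SB : PastureStr B}
    (hSA : SA.IsPasture) (hSB : SB.IsPasture) {f : A → B} (hf : SA.IsHom SB f)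
    {a : A} (ha : a ≠ SA.zero) : f a ≠ SB.zero := by
  obtain ⟨b, hb⟩ := hSA.exists_inv a ha
  intro h
  have hm := hf.map_mul a b
  rw [hb, hf.map_one, h, hSB.zero_mul] at hm
  exact hSB.one_ne_zero hm

/-- The involution of a pasture sends nonzero elements to nonzero elements. -/
theorem neg_ne_zero' {A : Type v} {SA : PastureStr A} (hSA : SA.IsPasture)
    {a : A} (ha : a ≠ SA.zero) : SA.neg a ≠ SA.zero := fun h =>
  ha (by rw [← hSA.neg_neg a, h, hSA.neg_zero])

/-- **The fibered product of pastures satisfies the universal property of the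
fibered product**: for a pasture `P'` and morphisms `g₁ : P' → P₁`,
`g₂ : P' → P₂` with `f₁ ∘ g₁ = f₂ ∘ g₂` there is a unique morphism
`g : P' → P₁ ×_P P₂` with `π₁ ∘ g = g₁` and `π₂ ∘ g = g₂`; explicitly,
`g 0 = 0` and `g x = (g₁ x, g₂ x)` for nonzero `x`. -/
theorem fibered_product_universal_property
    (S : PastureStr P) (S₁ : PastureStr P₁) (S₂ : PastureStr P₂)
    (hS : S.IsPasture) (hS₁ : S₁.IsPasture) (hS₂ : S₂.IsPasture)
    (f₁ : P₁ → P) (f₂ : P₂ → P) (hf₁ : S₁.IsHom S f₁) (hf₂ : S₂.IsHom S f₂)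
    (P' : Type v) (S' : PastureStr P') (hS' : S'.IsPasture)
    (g₁ : P' → P₁) (g₂ : P' → P₂) (hg₁ : S'.IsHom S₁ g₁) (hg₂ : S'.IsHom S₂ g₂)
    (hcomm : f₁ ∘ g₁ = f₂ ∘ g₂) :
    ∃ g : P' → FibCarrier S₁ S₂ f₁ f₂,
      (PastureStr.IsHom S' (fibStr S S₁ S₂ hS₁ hS₂ f₁ f₂ hf₁ hf₂) g ∧
        fibProj₁ S₁ S₂ f₁ f₂ ∘ g = g₁ ∧ fibProj₂ S₁ S₂ f₁ f₂ ∘ g = g₂ ∧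
        g S'.zero = none ∧
        ∀ (x : P') (hx : g₁ x ≠ S₁.zero ∧ g₂ x ≠ S₂.zero ∧ f₁ (g₁ x) = f₂ (g₂ x)),
          g x = some ⟨(g₁ x, g₂ x), hx⟩) ∧
      ∀ g' : P' → FibCarrier S₁ S₂ f₁ f₂,
        (PastureStr.IsHom S' (fibStr S S₁ S₂ hS₁ hS₂ f₁ f₂ hf₁ hf₂) g' ∧
          fibProj₁ S₁ S₂ f₁ f₂ ∘ g' = g₁ ∧ fibProj₂ S₁ S₂ f₁ f₂ ∘ g' = g₂) →
        g' = g := by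
  classical
  have hcomm' : ∀ x, f₁ (g₁ x) = f₂ (g₂ x) := fun x => congrFun hcomm x
  set F := fibStr S S₁ S₂ hS₁ hS₂ f₁ f₂ hf₁ hf₂ with hF
  refine ⟨fun x => (if hx : x = S'.zero then none else
      some ⟨(g₁ x, g₂ x), hom_ne_zero hS' hS₁ hg₁ hx, hom_ne_zero hS' hS₂ hg₂ hx, hcomm' x⟩ :
        Option {p : P₁ × P₂ // p.1 ≠ S₁.zero ∧ p.2 ≠ S₂.zero ∧ f₁ p.1 = f₂ p.2}),
    ⟨?_, ?_, ?_, ?_, ?_⟩, ?_⟩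
  · constructor
    · -- map_mul
      intro a b
      by_cases ha : a = S'.zero
      · have hz : S'.mul a b = S'.zero := by rw [ha, hS'.zero_mul]
        rw [dif_pos hz, dif_pos ha]
        cases (if hx : b = S'.zero then (none : FibCarrier S₁ S₂ f₁ f₂) else
          some ⟨(g₁ b, g₂ b), hom_ne_zero hS' hS₁ hg₁ hx, hom_ne_zero hS' hS₂ hg₂ hx,
            hcomm' b⟩) <;> rfl
      · by_cases hb : b = S'.zero
        · have hz : S'.mul a b = S'.zero := by rw [hb, hS'.mul_comm, hS'.zero_mul]
          rw [dif_pos hz, dif_pos hb]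
          cases (if hx : a = S'.zero then (none : FibCarrier S₁ S₂ f₁ f₂) else
            some ⟨(g₁ a, g₂ a), hom_ne_zero hS' hS₁ hg₁ hx, hom_ne_zero hS' hS₂ hg₂ hx,
              hcomm' a⟩) <;> rfl
        · have hz : S'.mul a b ≠ S'.zero := hS'.mul_ne_zero a b ha hb
          rw [dif_neg hz, dif_neg ha, dif_neg hb]
          exact congrArg some (Subtype.ext (Prod.ext (hg₁.map_mul a b) (hg₂.map_mul a b)))
    · -- map_zero
      rw [dif_pos rfl]; rfl
    · -- map_one
      rw [dif_neg hS'.one_ne_zero]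
      exact congrArg some (Subtype.ext (Prod.ext hg₁.map_one hg₂.map_one))
    · -- map_neg
      intro a
      by_cases ha : a = S'.zero
      · have hz : S'.neg a = S'.zero := by rw [ha, hS'.neg_zero]
        rw [dif_pos hz, dif_pos ha]; rfl
      · have hz : S'.neg a ≠ S'.zero := neg_ne_zero' hS' ha
        rw [dif_neg hz, dif_neg ha]
        exact congrArg some (Subtype.ext (Prod.ext (hg₁.map_neg a) (hg₂.map_neg a)))
    · -- map_null
      intro a b c h
      by_cases ha : a = S'.zero <;> by_cases hb : b = S'.zero <;>
        by_cases hc : c = S'.zero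
      · rw [dif_pos ha, dif_pos hb, dif_pos hc]; trivial
      · rw [dif_pos ha, dif_pos hb, dif_neg hc]
        exact absurd ((hS'.null_zero c S'.zero).mp
          (hS'.null_swap_left _ _ _ (hS'.null_swap_right _ _ _
            (by rw [ha, hb] at h; exact h)))) (by rw [hS'.neg_zero]; exact hc)
      · rw [dif_pos ha, dif_neg hb, dif_pos hc]
        exact absurd ((hS'.null_zero b S'.zero).mp
          (hS'.null_swap_right _ _ _ (hS'.null_swap_left _ _ _
            (by rw [ha, hc] at h; exact h)))) (by rw [hS'.neg_zero]; exact hb)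
      · rw [dif_pos ha, dif_neg hb, dif_neg hc]
        have h' : S'.null b c S'.zero :=
          hS'.null_swap_right _ _ _ (hS'.null_swap_left _ _ _ (by rw [ha] at h; exact h))
        have hbc : b = S'.neg c := (hS'.null_zero b c).mp h'
        exact ⟨show g₁ b = S₁.neg (g₁ c) by rw [hbc, hg₁.map_neg],
          show g₂ b = S₂.neg (g₂ c) by rw [hbc, hg₂.map_neg]⟩
      · rw [dif_neg ha, dif_pos hb, dif_pos hc]
        exact absurd ((hS'.null_zero a S'.zero).mp
          (hS'.null_swap_right _ _ _ (by rw [hb, hc] at h; exact h)))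
          (by rw [hS'.neg_zero]; exact ha)
      · rw [dif_neg ha, dif_pos hb, dif_neg hc]
        have h' : S'.null a c S'.zero :=
          hS'.null_swap_right _ _ _ (by rw [hb] at h; exact h)
        have hac : a = S'.neg c := (hS'.null_zero a c).mp h'
        exact ⟨show g₁ a = S₁.neg (g₁ c) by rw [hac, hg₁.map_neg],
          show g₂ a = S₂.neg (g₂ c) by rw [hac, hg₂.map_neg]⟩
      · rw [dif_neg ha, dif_neg hb, dif_pos hc]
        have h' : S'.null a b S'.zero := by rw [hc] at h; exact h
        have hab : a = S'.neg b := (hS'.null_zero a b).mp h'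
        exact ⟨show g₁ a = S₁.neg (g₁ b) by rw [hab, hg₁.map_neg],
          show g₂ a = S₂.neg (g₂ b) by rw [hab, hg₂.map_neg]⟩
      · rw [dif_neg ha, dif_neg hb, dif_neg hc]
        exact ⟨hg₁.map_null a b c h, hg₂.map_null a b c h⟩
  · -- π₁ ∘ g = g₁
    funext x
    by_cases hx : x = S'.zero
    · show fibProj₁ S₁ S₂ f₁ f₂ ((if hx : x = S'.zero then _ else _ :
        Option {p : P₁ × P₂ // p.1 ≠ S₁.zero ∧ p.2 ≠ S₂.zero ∧ f₁ p.1 = f₂ p.2})) = _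
      rw [dif_pos hx]
      rw [hx, hg₁.map_zero]; rfl
    · show fibProj₁ S₁ S₂ f₁ f₂ ((if hx : x = S'.zero then _ else _ :
        Option {p : P₁ × P₂ // p.1 ≠ S₁.zero ∧ p.2 ≠ S₂.zero ∧ f₁ p.1 = f₂ p.2})) = _
      rw [dif_neg hx]; rfl
  · -- π₂ ∘ g = g₂
    funext x
    by_cases hx : x = S'.zero
    · show fibProj₂ S₁ S₂ f₁ f₂ ((if hx : x = S'.zero then _ else _ :
        Option {p : P₁ × P₂ // p.1 ≠ S₁.zero ∧ p.2 ≠ S₂.zero ∧ f₁ p.1 = f₂ p.2})) = _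
      rw [dif_pos hx]
      rw [hx, hg₂.map_zero]; rfl
    · show fibProj₂ S₁ S₂ f₁ f₂ ((if hx : x = S'.zero then _ else _ :
        Option {p : P₁ × P₂ // p.1 ≠ S₁.zero ∧ p.2 ≠ S₂.zero ∧ f₁ p.1 = f₂ p.2})) = _
      rw [dif_neg hx]; rfl
  · exact dif_pos rfl
  · intro x hx
    have hx' : x ≠ S'.zero := fun h => hx.1 (by rw [h, hg₁.map_zero])
    exact dif_neg hx'
  · -- uniqueness
    rintro g' ⟨hg', hπ₁, hπ₂⟩
    funext x
    by_cases hx : x = S'.zero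
    · rw [dif_pos hx, hx]
      exact hg'.map_zero
    · rw [dif_neg hx]
      have h1 : fibProj₁ S₁ S₂ f₁ f₂ (g' x) = g₁ x := congrFun hπ₁ x
      have h2 : fibProj₂ S₁ S₂ f₁ f₂ (g' x) = g₂ x := congrFun hπ₂ x
      match hgx : g' x with
      | none =>
          rw [hgx] at h1
          exact absurd h1.symm (hom_ne_zero hS' hS₁ hg₁ hx)
      | some a =>
          rw [hgx] at h1 h2
          exact congrArg some (Subtype.ext (Prod.ext h1 h2))
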